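/- Let κ > 0, ν, α, β ∈ ℝ and μ := i(4-κ)/(4√κ). Then the identity (β√κ - αν)·sinh²(z/2) + ν·sinh(z/2) - 2i√κ·μ·cosh(z/2)·(4α·sinh(z/2) + (κ-4)) = 0 holds for all z in the strip S := {z ∈ ℂ : 0 < Im z < π} if and only if κ = 4, ν = 0 and β = 0 (with α arbitrary). Consequently, coupling of the Gaussian free field with combined Dirichlet–Neumann covariance Γ_DN to the dipolar (δ,σ)-SLE with drift ν is possible only for κ = 4 and ν = 0. -/

import Mathlib

open Complex

/-- Coupling of the GFF with combined Dirichlet–Neumann covariance to the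
dipolar (δ,σ)-SLE with drift ν is possible only for κ = 4 and ν = 0. -/
theorem coupling_dirichlet_neumann_only_kappa_four (κ ν α β : ℝ) (hκ : 0 < κ)
    (μ : ℂ) (hμ : μ = Complex.I * (4 - (κ : ℂ)) / (4 * (Real.sqrt κ : ℂ))) :
    (∀ z : ℂ, 0 < z.im → z.im < Real.pi →
      ((β : ℂ) * (Real.sqrt κ : ℂ) - (α : ℂ) * (ν : ℂ)) * Complex.sinh (z / 2) ^ 2
        + (ν : ℂ) * Complex.sinh (z / 2)
        - 2 * Complex.I * (Real.sqrt κ : ℂ) * μ * Complex.cosh (z / 2)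
            * (4 * (α : ℂ) * Complex.sinh (z / 2) + ((κ : ℂ) - 4)) = 0)
    ↔ (κ = 4 ∧ ν = 0 ∧ β = 0) := by
  have hsκ : (0:ℝ) < Real.sqrt κ := Real.sqrt_pos.mpr hκ
  have hsκ' : (Real.sqrt κ : ℂ) ≠ 0 := by exact_mod_cast hsκ.ne'
  have hμ2 : 2 * Complex.I * (Real.sqrt κ : ℂ) * μ = ((κ:ℂ) - 4) / 2 := by
    rw [hμ]
    field_simp
    linear_combination (4 * (4 - (κ:ℂ))) * Complex.I_sq
  constructor
  · intro h
    have key : ∀ θ : ℝ, 0 < θ → θ < Real.pi / 2 →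
        -(β * Real.sqrt κ - α * ν) * Real.sin θ ^ 2 - ((κ-4)^2/2) * Real.cos θ = 0 ∧
        ν * Real.sin θ - ((κ-4)/2) * Real.cos θ * (4 * α * Real.sin θ) = 0 := by
      intro θ h1 h2
      have hz := h (2 * (θ:ℂ) * Complex.I) (by simp [h1]) (by simp; linarith)
      have hdiv : (2 * (θ:ℂ) * Complex.I) / 2 = (θ:ℂ) * Complex.I := by ring
      rw [hdiv, Complex.sinh_mul_I, Complex.cosh_mul_I, hμ2] at hz
      have hz2 : ((-(β * Real.sqrt κ - α * ν) * Real.sin θ ^ 2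
            - ((κ-4)^2/2) * Real.cos θ : ℝ) : ℂ)
          + ((ν * Real.sin θ - ((κ-4)/2) * Real.cos θ * (4 * α * Real.sin θ) : ℝ) : ℂ)
            * Complex.I = 0 := by
        push_cast
        linear_combination hz - ((β:ℂ) * (Real.sqrt κ : ℂ) - (α:ℂ) * (ν:ℂ))
          * Complex.sin (θ:ℂ) ^ 2 * Complex.I_sq
      have h0 := Complex.ext_iff.mp hz2
      simp only [Complex.add_re, Complex.add_im, Complex.ofReal_re, Complex.ofReal_im,
        Complex.mul_re, Complex.mul_im, Complex.I_re, Complex.I_im, Complex.zero_re,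
        Complex.zero_im, mul_zero, zero_mul, mul_one, sub_zero, add_zero, zero_add] at h0
      exact ⟨by linarith [h0.1], by linarith [h0.2]⟩
    have hπ := Real.pi_gt_three
    have e1 := (key (Real.pi/6) (by linarith) (by linarith)).1
    have e2 := (key (Real.pi/3) (by linarith) (by linarith)).1
    rw [Real.sin_pi_div_six, Real.cos_pi_div_six] at e1
    rw [Real.sin_pi_div_three, Real.cos_pi_div_three] at e2
    have h3sq : Real.sqrt 3 ^ 2 = 3 := Real.sq_sqrt (by norm_num)
    rw [div_pow, h3sq] at e2
    have h3 : (1:ℝ) ≤ Real.sqrt 3 := by nlinarith [Real.sqrt_nonneg 3]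
    have hD : (κ - 4)^2 = 0 := by
      nlinarith [mul_nonneg (sq_nonneg (κ-4)) (by linarith : (0:ℝ) ≤ Real.sqrt 3 - 1),
        sq_nonneg (κ-4)]
    have hκ4 : κ = 4 := by
      have := pow_eq_zero_iff (n := 2) (by norm_num) |>.mp hD
      linarith
    rw [hD] at e1
    have hA : β * Real.sqrt κ - α * ν = 0 := by linarith
    have i1 := (key (Real.pi/6) (by linarith) (by linarith)).2
    rw [Real.sin_pi_div_six, Real.cos_pi_div_six, hκ4] at i1
    have hν : ν = 0 := by linarith [i1]
    have hs4 : Real.sqrt κ = 2 := by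
      rw [hκ4, show (4:ℝ) = 2^2 by norm_num, Real.sqrt_sq (by norm_num : (0:ℝ) ≤ 2)]
    rw [hs4, hν] at hA
    exact ⟨hκ4, hν, by linarith⟩
  · rintro ⟨hκ4, hν, hβ⟩
    intro z _ _
    subst hκ4 hν hβ
    have hm : μ = 0 := by rw [hμ]; norm_num
    simp [hm]
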